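/- Let n ≥ 1 and let T ⊆ ℝⁿ be an infinite countable set whose intersection with every bounded set is finite. Then T satisfies the angular condition if and only if for every continuous function f : Sⁿ⁻¹ → ℝ one has lim_{r→∞} (1/N(r)) · Σ_{x ∈ T, 0 < |x| < r} f(x/|x|) = (1/m(Bₙ)) · ∫_{Bₙ} f(x/|x|) dm(x). -/

import Mathlib

open MeasureTheory Metric Filter Topology

/-- The number of points of a set, as a real number (finite sets in view). -/
noncomputable def cnt {α : Type*} (S : Set α) : ℝ := Nat.card S

/-- `N(r)`: the number of points of `T` of norm `< r`. -/
noncomputable def NN {n : ℕ} (T : Set (EuclideanSpace ℝ (Fin n))) (r : ℝ) : ℝ :=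
  cnt (T ∩ ball 0 r)

/-- The wedge `W(X, r)` over a subset `X` of the unit sphere. -/
def Wedge {n : ℕ} (X : Set (EuclideanSpace ℝ (Fin n))) (r : ℝ) :
    Set (EuclideanSpace ℝ (Fin n)) :=
  {x | 0 < ‖x‖ ∧ ‖x‖ < r ∧ ‖x‖⁻¹ • x ∈ X}

/-- The angular equidistribution condition. -/
def AngularCond {n : ℕ} (T : Set (EuclideanSpace ℝ (Fin n))) : Prop :=
  ∀ X ⊆ sphere (0 : EuclideanSpace ℝ (Fin n)) 1, MeasurableSet X →
    volume (frontier (Wedge X 1)) = 0 →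
    Tendsto (fun r => cnt (T ∩ Wedge X r) / NN T r) atTop
      (𝓝 ((volume (Wedge X 1)).toReal /
        (volume (ball (0 : EuclideanSpace ℝ (Fin n)) 1)).toReal))

open Classical in
/-- Extension of a continuous function on the sphere to all of `ℝⁿ` by `f(x) = f(x/‖x‖)`
(and `0` at the origin). -/
noncomputable def sphProjExt {n : ℕ}
    (f : C(sphere (0 : EuclideanSpace ℝ (Fin n)) 1, ℝ))
    (x : EuclideanSpace ℝ (Fin n)) : ℝ :=
  if hx : x ≠ 0 then
    f ⟨‖x‖⁻¹ • x, by
      simp [mem_sphere_zero_iff_norm, norm_smul, inv_mul_cancel₀ (norm_ne_zero_iff.mpr hx)]⟩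
  else 0

/-! ### Auxiliary development -/

open Set
open scoped Pointwise ENNReal NNReal

namespace AngAux

variable {n : ℕ}

local notation "E" => EuclideanSpace ℝ (Fin n)
local notation "Sph" => sphere (0 : EuclideanSpace ℝ (Fin n)) 1

/-- membership in the sphere for the normalized vector -/
lemma normSmul_mem_sphere {x : EuclideanSpace ℝ (Fin n)} (hx : x ≠ 0) :
    ‖x‖⁻¹ • x ∈ Sph := by
  simp [mem_sphere_zero_iff_norm, norm_smul, inv_mul_cancel₀ (norm_ne_zero_iff.mpr hx)]

open Classical in
/-- The projection to the sphere, as a map into the subtype (junk value `hn`-based at 0). -/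
noncomputable def proj (hn : 1 ≤ n) (x : EuclideanSpace ℝ (Fin n)) : Sph :=
  if hx : x ≠ 0 then ⟨‖x‖⁻¹ • x, normSmul_mem_sphere hx⟩
  else ⟨EuclideanSpace.single (⟨0, hn⟩ : Fin n) (1:ℝ), by
    simp [mem_sphere_zero_iff_norm, EuclideanSpace.norm_single]⟩

lemma proj_coe (hn : 1 ≤ n) {x : EuclideanSpace ℝ (Fin n)} (hx : x ≠ 0) :
    (proj hn x : EuclideanSpace ℝ (Fin n)) = ‖x‖⁻¹ • x := by
  simp [proj, hx]

lemma sphProjExt_eq (hn : 1 ≤ n) (f : C(Sph, ℝ)) {x : EuclideanSpace ℝ (Fin n)} (hx : x ≠ 0) :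
    sphProjExt f x = f (proj hn x) := by
  rw [sphProjExt, dif_pos hx, proj, dif_pos hx]

lemma mem_wedge_iff_proj (hn : 1 ≤ n) {s : Set Sph} {r : ℝ}
    {x : EuclideanSpace ℝ (Fin n)} :
    x ∈ Wedge (Subtype.val '' s) r ↔ (0 < ‖x‖ ∧ ‖x‖ < r) ∧ proj hn x ∈ s := by
  constructor
  · rintro ⟨h1, h2, y, hy, hyx⟩
    have hx : x ≠ 0 := by simpa [norm_pos_iff] using h1
    refine ⟨⟨h1, h2⟩, ?_⟩
    have : proj hn x = y := by
      apply Subtype.ext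
      rw [proj_coe hn hx, hyx]
    rwa [this]
  · rintro ⟨⟨h1, h2⟩, hp⟩
    have hx : x ≠ 0 := by simpa [norm_pos_iff] using h1
    exact ⟨h1, h2, proj hn x, hp, proj_coe hn hx⟩

lemma wedge_image_eq_smul (s : Set Sph) :
    Wedge (Subtype.val '' s) 1 = Ioo (0:ℝ) 1 • (Subtype.val '' s) := by
  ext x
  constructor
  · rintro ⟨h1, h2, y, hy, hyx⟩
    refine Set.mem_smul.2 ⟨‖x‖, ⟨h1, h2⟩, ‖x‖⁻¹ • x, ⟨y, hy, hyx⟩, ?_⟩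
    rw [smul_smul, mul_inv_cancel₀ (by positivity), one_smul]
  · intro hx
    rcases Set.mem_smul.1 hx with ⟨c, hc, y, hy, rfl⟩
    have hy1 : ‖y‖ = 1 := by
      rcases hy with ⟨z, hz, rfl⟩
      simpa [mem_sphere_zero_iff_norm] using z.2
    have hcy : ‖c • y‖ = c := by
      rw [norm_smul, hy1, mul_one, Real.norm_eq_abs, abs_of_pos hc.1]
    refine ⟨by rw [hcy]; exact hc.1, by rw [hcy]; exact hc.2, ?_⟩
    rw [hcy, smul_smul, inv_mul_cancel₀ hc.1.ne', one_smul]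
    exact hy

/-- The ambient normalization map is measurable. -/
lemma measurable_normSmul :
    Measurable (fun x : EuclideanSpace ℝ (Fin n) => ‖x‖⁻¹ • x) :=
  (measurable_norm.inv).smul measurable_id

lemma measurableSet_wedge {X : Set (EuclideanSpace ℝ (Fin n))} (hX : MeasurableSet X) (r : ℝ) :
    MeasurableSet (Wedge X r) := by
  have : Wedge X r =
      {x : EuclideanSpace ℝ (Fin n) | 0 < ‖x‖} ∩ {x | ‖x‖ < r} ∩
        (fun x : EuclideanSpace ℝ (Fin n) => ‖x‖⁻¹ • x) ⁻¹' X := by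
    ext x; simp [Wedge, and_assoc]
  rw [this]
  exact ((measurableSet_lt measurable_const measurable_norm).inter
    (measurableSet_lt measurable_norm measurable_const)).inter
    (measurable_normSmul hX)

/-! ### The limit measure on the sphere -/

/-- `toSphere` of Lebesgue measure. -/
noncomputable def nu0 (n : ℕ) : Measure (sphere (0 : EuclideanSpace ℝ (Fin n)) 1) :=
  (volume : Measure (EuclideanSpace ℝ (Fin n))).toSphere

lemma nu0_apply {s : Set Sph} (hs : MeasurableSet s) :
    nu0 n s = n * volume (Wedge (Subtype.val '' s) 1) := by
  rw [nu0, Measure.toSphere_apply' _ hs, wedge_image_eq_smul]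
  simp

lemma volume_ball_pos : 0 < volume (ball (0 : EuclideanSpace ℝ (Fin n)) 1) :=
  measure_ball_pos _ _ one_pos

lemma volume_ball_lt_top : volume (ball (0 : EuclideanSpace ℝ (Fin n)) 1) < ⊤ :=
  measure_ball_lt_top

lemma nontrivial_E (hn : 1 ≤ n) : Nontrivial (EuclideanSpace ℝ (Fin n)) := by
  have : 0 < Module.finrank ℝ (EuclideanSpace ℝ (Fin n)) := by simp; omega
  exact Module.nontrivial_of_finrank_pos this

lemma nu0_univ (hn : 1 ≤ n) :
    nu0 n univ = n * volume (ball (0 : EuclideanSpace ℝ (Fin n)) 1) := by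
  haveI := nontrivial_E hn
  rw [nu0, Measure.toSphere_apply_univ]
  simp

lemma nu0_univ_ne_zero (hn : 1 ≤ n) : nu0 n univ ≠ 0 := by
  rw [nu0_univ hn]
  have h1 : ((n : ℝ≥0∞)) ≠ 0 := by
    exact_mod_cast (Nat.pos_of_ne_zero (by omega)).ne'
  exact (ENNReal.mul_pos h1 volume_ball_pos.ne').ne'

lemma nu0_univ_ne_top (hn : 1 ≤ n) : nu0 n univ ≠ ⊤ := by
  rw [nu0_univ hn]
  exact (ENNReal.mul_lt_top (ENNReal.natCast_lt_top _) volume_ball_lt_top).ne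

/-- The normalized surface measure as a probability measure. -/
noncomputable def nuP (hn : 1 ≤ n) : ProbabilityMeasure Sph :=
  ⟨(nu0 n univ)⁻¹ • nu0 n, ⟨by
    simp [Measure.smul_apply, smul_eq_mul,
      ENNReal.inv_mul_cancel (nu0_univ_ne_zero hn) (nu0_univ_ne_top hn)]⟩⟩

lemma nuP_coe_apply (hn : 1 ≤ n) (s : Set Sph) :
    (nuP hn : Measure Sph) s = (nu0 n univ)⁻¹ * nu0 n s := rfl

lemma nuP_toReal_eq (hn : 1 ≤ n) {s : Set Sph} (hs : MeasurableSet s) :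
    ((nuP hn : Measure Sph) s).toReal =
      (volume (Wedge (Subtype.val '' s) 1)).toReal /
        (volume (ball (0 : EuclideanSpace ℝ (Fin n)) 1)).toReal := by
  rw [nuP_coe_apply, nu0_apply hs, nu0_univ hn, ENNReal.toReal_mul, ENNReal.toReal_inv,
    ENNReal.toReal_mul, ENNReal.toReal_mul]
  have hn0 : ((n : ℝ)) ≠ 0 := by
    exact_mod_cast (Nat.pos_of_ne_zero (by omega)).ne'
  rw [ENNReal.toReal_natCast, mul_inv, div_eq_mul_inv, mul_mul_mul_comm,
    inv_mul_cancel₀ hn0, one_mul, mul_comm]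

end AngAux

/-! ### Integral identity via polar decomposition -/

namespace AngAux

variable {n : ℕ}

local notation "Sph" => sphere (0 : EuclideanSpace ℝ (Fin n)) 1

lemma finrank_E : Module.finrank ℝ (EuclideanSpace ℝ (Fin n)) = n := by simp

lemma integral_ball_sphProjExt (hn : 1 ≤ n) (f : C(Sph, ℝ)) :
    ∫ x in ball (0 : EuclideanSpace ℝ (Fin n)) 1, sphProjExt f x =
      (∫ y, f y ∂(nu0 n)) * (1 / n) := by
  haveI := nontrivial_E hn
  have hmp := (volume :
    Measure (EuclideanSpace ℝ (Fin n))).measurePreserving_homeomorphUnitSphereProd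
  have key := hmp.integral_comp (Homeomorph.measurableEmbedding _)
    (fun p : Sph × Set.Ioi (0:ℝ) =>
      f p.1 * (Set.Iio (⟨1, Set.mem_Ioi.mpr one_pos⟩ : Set.Ioi (0:ℝ))).indicator (fun _ => (1:ℝ)) p.2)
  have lhs_eq : (∫ x : ({(0 : EuclideanSpace ℝ (Fin n))}ᶜ : Set _),
      f ((homeomorphUnitSphereProd (EuclideanSpace ℝ (Fin n)) x).1) *
        (Set.Iio (⟨1, Set.mem_Ioi.mpr one_pos⟩ : Set.Ioi (0:ℝ))).indicator (fun _ => (1:ℝ))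
          ((homeomorphUnitSphereProd (EuclideanSpace ℝ (Fin n)) x).2)
      ∂((volume : Measure (EuclideanSpace ℝ (Fin n))).comap Subtype.val)) =
      ∫ x in ball (0 : EuclideanSpace ℝ (Fin n)) 1, sphProjExt f x := by
    have step1 : ∀ x : ({(0 : EuclideanSpace ℝ (Fin n))}ᶜ : Set _),
        f ((homeomorphUnitSphereProd (EuclideanSpace ℝ (Fin n)) x).1) *
          (Set.Iio (⟨1, Set.mem_Ioi.mpr one_pos⟩ : Set.Ioi (0:ℝ))).indicator (fun _ => (1:ℝ))
            ((homeomorphUnitSphereProd (EuclideanSpace ℝ (Fin n)) x).2) =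
        (ball (0 : EuclideanSpace ℝ (Fin n)) 1).indicator (sphProjExt f) x.1 := by
      rintro ⟨x, hx⟩
      have hx0 : x ≠ 0 := hx
      by_cases hb : ‖x‖ < 1
      · have hmem : x ∈ ball (0 : EuclideanSpace ℝ (Fin n)) 1 := by
          simpa [mem_ball_zero_iff] using hb
        rw [Set.indicator_of_mem hmem]
        have h2 : ((homeomorphUnitSphereProd (EuclideanSpace ℝ (Fin n)) ⟨x, hx⟩).2 :
            ℝ) = ‖x‖ := by simp
        have hmem2 : (homeomorphUnitSphereProd (EuclideanSpace ℝ (Fin n)) ⟨x, hx⟩).2 ∈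
            Set.Iio (⟨1, Set.mem_Ioi.mpr one_pos⟩ : Set.Ioi (0:ℝ)) := by
          simp only [Set.mem_Iio, ← Subtype.coe_lt_coe, h2]
          exact hb
        rw [Set.indicator_of_mem hmem2, mul_one, sphProjExt, dif_pos hx0]
        congr 1
        apply Subtype.ext
        simp
      · have hmem : x ∉ ball (0 : EuclideanSpace ℝ (Fin n)) 1 := by
          simpa [mem_ball_zero_iff] using hb
        rw [Set.indicator_of_notMem hmem]
        have hmem2 : (homeomorphUnitSphereProd (EuclideanSpace ℝ (Fin n)) ⟨x, hx⟩).2 ∉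
            Set.Iio (⟨1, Set.mem_Ioi.mpr one_pos⟩ : Set.Ioi (0:ℝ)) := by
          simp only [Set.mem_Iio, ← Subtype.coe_lt_coe]
          exact fun h => hb (by simpa using h)
        rw [Set.indicator_of_notMem hmem2, mul_zero]
    rw [integral_congr_ae (Filter.Eventually.of_forall step1),
      integral_subtype_comap (measurableSet_singleton _).compl,
      MeasureTheory.restrict_compl_singleton (0 : EuclideanSpace ℝ (Fin n)),
      integral_indicator measurableSet_ball]
  rw [lhs_eq] at key
  rw [key, integral_prod_mul (fun y : Sph => f y)
    (fun t : Set.Ioi (0:ℝ) =>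
      (Set.Iio (⟨1, Set.mem_Ioi.mpr one_pos⟩ : Set.Ioi (0:ℝ))).indicator (fun _ => (1:ℝ)) t)]
  have : (∫ t : Set.Ioi (0:ℝ),
      (Set.Iio (⟨1, Set.mem_Ioi.mpr one_pos⟩ : Set.Ioi (0:ℝ))).indicator (fun _ => (1:ℝ)) t
      ∂(Measure.volumeIoiPow (Module.finrank ℝ (EuclideanSpace ℝ (Fin n)) - 1))) = 1 / n := by
    rw [show (fun _ => (1:ℝ)) = (1 : Set.Ioi (0:ℝ) → ℝ) from rfl,
      integral_indicator_one measurableSet_Iio, measureReal_def,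
      Measure.volumeIoiPow_apply_Iio]
    rw [finrank_E]
    have hone : ((⟨1, Set.mem_Ioi.mpr one_pos⟩ : Set.Ioi (0:ℝ)) : ℝ) = 1 := rfl
    rw [hone, one_pow, show ((n - 1 : ℕ) : ℝ) + 1 = (n : ℝ) by
      rw [Nat.cast_sub hn]; push_cast; ring,
      ENNReal.toReal_ofReal (by positivity)]
  rw [this]
  rfl

end AngAux

namespace AngAux

variable {n : ℕ}

local notation "Sph" => sphere (0 : EuclideanSpace ℝ (Fin n)) 1

lemma volume_ball_toReal_pos :
    0 < (volume (ball (0 : EuclideanSpace ℝ (Fin n)) 1)).toReal :=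
  ENNReal.toReal_pos volume_ball_pos.ne' volume_ball_lt_top.ne

lemma target_integral_eq (hn : 1 ≤ n) (f : C(Sph, ℝ)) :
    (1 / (volume (ball (0 : EuclideanSpace ℝ (Fin n)) 1)).toReal) *
      ∫ x in ball (0 : EuclideanSpace ℝ (Fin n)) 1, sphProjExt f x =
      ∫ y, f y ∂((nuP hn : Measure Sph)) := by
  rw [integral_ball_sphProjExt hn f,
    show ((nuP hn : Measure Sph)) = (nu0 n univ)⁻¹ • nu0 n from rfl,
    integral_smul_measure, nu0_univ hn, ENNReal.toReal_inv, ENNReal.toReal_mul,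
    ENNReal.toReal_natCast, smul_eq_mul]
  have hb : 0 < (volume (ball (0 : EuclideanSpace ℝ (Fin n)) 1)).toReal :=
    volume_ball_toReal_pos
  have hn0 : ((n : ℝ)) ≠ 0 := by
    exact_mod_cast (Nat.pos_of_ne_zero (by omega)).ne'
  rw [one_div, mul_inv]
  ring

/-! ### Empirical measures -/

variable (T : Set (EuclideanSpace ℝ (Fin n)))

/-- The annulus points of `T`. -/
def Ann (r : ℝ) : Set (EuclideanSpace ℝ (Fin n)) := T ∩ (ball 0 r \ {0})

variable {T}
variable (hfin : ∀ S : Set (EuclideanSpace ℝ (Fin n)),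
    Bornology.IsBounded S → (T ∩ S).Finite)

lemma wedge_subset_annSet' (X : Set (EuclideanSpace ℝ (Fin n))) (r : ℝ) :
    Wedge X r ⊆ ball 0 r \ {0} := by
  rintro x ⟨h1, h2, -⟩
  exact ⟨by simpa [mem_ball_zero_iff] using h2, by simpa [norm_pos_iff] using h1⟩

include hfin

lemma finite_Ann (r : ℝ) : (Ann T r).Finite :=
  hfin _ ((isBounded_ball (x := (0 : EuclideanSpace ℝ (Fin n))) (r := r)).subset
    diff_subset)

/-- The empirical measure of projections of points of `T` in the ball of radius `r`. -/
noncomputable def empM (hn : 1 ≤ n) (r : ℝ) : Measure Sph :=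
  ∑ x ∈ (finite_Ann hfin r).toFinset, Measure.dirac (proj hn x)

open Classical in
lemma inter_wedge_eq_filter (hn : 1 ≤ n) (s : Set Sph) (r : ℝ) :
    T ∩ Wedge (Subtype.val '' s) r =
      ((finite_Ann hfin r).toFinset.filter (fun x => proj hn x ∈ s) : Set _) := by
  ext x
  simp only [Finset.coe_filter, Set.mem_setOf_eq, Set.Finite.mem_toFinset, Set.mem_inter_iff]
  constructor
  · rintro ⟨hxT, hxW⟩
    rcases (mem_wedge_iff_proj hn).1 hxW with ⟨⟨h1, h2⟩, hp⟩
    exact ⟨⟨hxT, wedge_subset_annSet' _ r hxW⟩, hp⟩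
  · rintro ⟨⟨hxT, hxA⟩, hp⟩
    refine ⟨hxT, (mem_wedge_iff_proj hn).2 ⟨⟨?_, ?_⟩, hp⟩⟩
    · simpa [norm_pos_iff] using hxA.2
    · simpa [mem_ball_zero_iff] using hxA.1

open Classical in
lemma empM_apply (hn : 1 ≤ n) (r : ℝ) {s : Set Sph} (hs : MeasurableSet s) :
    empM hfin hn r s =
      (((finite_Ann hfin r).toFinset.filter (fun x => proj hn x ∈ s)).card : ℝ≥0∞) := by
  rw [empM, Measure.finset_sum_apply]
  rw [Finset.card_filter]
  push_cast
  refine Finset.sum_congr rfl fun x hx => ?_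
  rw [Measure.dirac_apply' _ hs]
  by_cases hp : proj hn x ∈ s
  · simp [hp, Set.indicator_of_mem]
  · simp [hp, Set.indicator_of_notMem]

open Classical in
lemma cnt_inter_wedge (hn : 1 ≤ n) (s : Set Sph) (r : ℝ) :
    cnt (T ∩ Wedge (Subtype.val '' s) r) =
      (((finite_Ann hfin r).toFinset.filter (fun x => proj hn x ∈ s)).card : ℝ) := by
  rw [cnt, inter_wedge_eq_filter hfin hn s r, Nat.card_coe_set_eq, Set.ncard_coe_finset]

lemma empM_univ (hn : 1 ≤ n) (r : ℝ) :
    empM hfin hn r univ = ((finite_Ann hfin r).toFinset.card : ℝ≥0∞) := by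
  classical
  rw [empM_apply hfin hn r MeasurableSet.univ]
  congr 1
  simp

lemma empM_integral (hn : 1 ≤ n) (r : ℝ) (f : C(Sph, ℝ)) :
    ∫ y, f y ∂(empM hfin hn r) = ∑ x ∈ (finite_Ann hfin r).toFinset, f (proj hn x) := by
  rw [empM, integral_finset_sum_measure fun x _ => ?_]
  · exact Finset.sum_congr rfl fun x _ => integral_dirac _ _
  · exact (BoundedContinuousFunction.mkOfCompact f).integrable _

lemma finsum_eq_sum_proj (hn : 1 ≤ n) (r : ℝ) (f : C(Sph, ℝ)) :
    (∑ᶠ x ∈ T ∩ {x : EuclideanSpace ℝ (Fin n) | 0 < ‖x‖ ∧ ‖x‖ < r}, sphProjExt f x) =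
      ∑ x ∈ (finite_Ann hfin r).toFinset, f (proj hn x) := by
  have hset : T ∩ {x : EuclideanSpace ℝ (Fin n) | 0 < ‖x‖ ∧ ‖x‖ < r} = Ann T r := by
    ext x
    simp only [Ann, Set.mem_inter_iff, Set.mem_setOf_eq, Set.mem_diff, mem_ball_zero_iff,
      Set.mem_singleton_iff]
    constructor
    · rintro ⟨h, h1, h2⟩
      exact ⟨h, h2, by simpa [norm_pos_iff] using h1⟩
    · rintro ⟨h, h2, h0⟩
      exact ⟨h, by simpa [norm_pos_iff] using h0, h2⟩
  rw [hset]
  have hfin' : (Ann T r ∩ Function.support (sphProjExt f)).Finite :=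
    (finite_Ann hfin r).subset Set.inter_subset_left
  have h1 : ∑ x ∈ hfin'.toFinset, sphProjExt f x
      = ∑ x ∈ (finite_Ann hfin r).toFinset, sphProjExt f x := by
    refine Finset.sum_subset ?_ ?_
    · intro x hx
      rw [Set.Finite.mem_toFinset] at hx ⊢
      exact hx.1
    · intro x hx hnx
      by_contra h
      exact hnx (hfin'.mem_toFinset.2
        ⟨(finite_Ann hfin r).mem_toFinset.1 hx, h⟩)
  rw [finsum_mem_eq_sum (sphProjExt f) hfin', h1]
  refine Finset.sum_congr rfl fun x hx => ?_
  have hx' := ((finite_Ann hfin r).mem_toFinset).1 hx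
  exact sphProjExt_eq hn f (by simpa using hx'.2.2)

end AngAux

namespace AngAux

variable {n : ℕ} {T : Set (EuclideanSpace ℝ (Fin n))}

local notation "Sph" => sphere (0 : EuclideanSpace ℝ (Fin n)) 1

section Counting

variable (hfin : ∀ S : Set (EuclideanSpace ℝ (Fin n)),
    Bornology.IsBounded S → (T ∩ S).Finite)

include hfin

/-- Number of points of `T` in the punctured ball of radius `r`, as a real number. -/
noncomputable def Mreal (r : ℝ) : ℝ := ((finite_Ann hfin r).toFinset.card : ℝ)

lemma Mreal_eq_cnt (r : ℝ) : Mreal hfin r = cnt (Ann T r) := by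
  rw [Mreal, cnt, Nat.card_eq_card_finite_toFinset (finite_Ann hfin r)]

lemma Mreal_nonneg (r : ℝ) : 0 ≤ Mreal hfin r := by
  rw [Mreal]; positivity

lemma Mreal_mono : Monotone (Mreal hfin) := by
  intro r r' h
  have hsub : Ann T r ⊆ Ann T r' :=
    Set.inter_subset_inter_right _ (Set.diff_subset_diff_left (ball_subset_ball h))
  rw [Mreal, Mreal]
  exact_mod_cast Finset.card_le_card (Set.Finite.toFinset_subset_toFinset.2 hsub)

lemma finite_inter_ball (r : ℝ) : (T ∩ ball 0 r).Finite :=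
  hfin _ isBounded_ball

lemma Mreal_le_NN (r : ℝ) : Mreal hfin r ≤ NN T r := by
  rw [Mreal_eq_cnt, NN, cnt, cnt]
  have h1 : Ann T r ⊆ T ∩ ball 0 r :=
    Set.inter_subset_inter_right _ Set.diff_subset
  exact_mod_cast Nat.card_mono (finite_inter_ball hfin r) h1

lemma NN_le_Mreal_add_one (r : ℝ) : NN T r ≤ Mreal hfin r + 1 := by
  rw [Mreal_eq_cnt, NN, cnt, cnt]
  have h1 : T ∩ ball 0 r ⊆ Ann T r ∪ {0} := by
    intro x hx
    by_cases hx0 : x = 0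
    · exact Or.inr (by simp [hx0])
    · exact Or.inl ⟨hx.1, hx.2, hx0⟩
  have h2 : Nat.card (T ∩ ball 0 r : Set _) ≤ Nat.card (Ann T r ∪ {0} : Set _) :=
    Nat.card_mono ((finite_Ann hfin r).union (Set.finite_singleton 0)) h1
  have h3 : Nat.card (Ann T r ∪ {0} : Set _) ≤ Nat.card (Ann T r) + 1 := by
    rw [Nat.card_coe_set_eq, Nat.card_coe_set_eq]
    refine le_trans (Set.ncard_union_le _ _) ?_
    have : ({(0 : EuclideanSpace ℝ (Fin n))} : Set _).ncard = 1 := Set.ncard_singleton 0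
    rw [this]
  have := le_trans h2 h3
  exact_mod_cast this

lemma Mreal_tendsto_atTop (hTi : T.Infinite) :
    Tendsto (Mreal hfin) atTop atTop := by
  rw [tendsto_atTop_atTop]
  intro b
  obtain ⟨k, hk⟩ := exists_nat_ge b
  have hTi' : (T \ {0}).Infinite := hTi.diff (Set.finite_singleton 0)
  obtain ⟨t, htsub, htcard⟩ := hTi'.exists_subset_card_eq k
  have hbdd : Bornology.IsBounded (t : Set (EuclideanSpace ℝ (Fin n))) :=
    t.finite_toSet.isBounded
  obtain ⟨R, hR⟩ := hbdd.subset_ball 0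
  refine ⟨R + 1, fun r hr => ?_⟩
  have hsub : (t : Set (EuclideanSpace ℝ (Fin n))) ⊆ Ann T r := by
    intro x hx
    refine ⟨(htsub hx).1, ?_, (htsub hx).2⟩
    have := hR hx
    rw [mem_ball] at this ⊢
    linarith
  have hss : t ⊆ (finite_Ann hfin r).toFinset := by
    intro x hx
    rw [Set.Finite.mem_toFinset]
    exact hsub hx
  have hcard := Finset.card_le_card hss
  rw [htcard] at hcard
  calc b ≤ (k : ℝ) := hk
    _ ≤ _ := by rw [Mreal]; exact_mod_cast hcard

lemma Mreal_pos_eventually (hTi : T.Infinite) :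
    ∀ᶠ r in atTop, 1 ≤ Mreal hfin r :=
  (Mreal_tendsto_atTop hfin hTi).eventually_ge_atTop 1

lemma NN_pos_eventually (hTi : T.Infinite) : ∀ᶠ r in atTop, 1 ≤ NN T r := by
  filter_upwards [Mreal_pos_eventually hfin hTi] with r hr
  exact le_trans hr (Mreal_le_NN hfin r)

/-- `M(r)/N(r) → 1`. -/
lemma M_div_NN_tendsto (hTi : T.Infinite) :
    Tendsto (fun r => Mreal hfin r / NN T r) atTop (𝓝 1) := by
  have hfrac : Tendsto (fun x : ℝ => x / (x + 1)) atTop (𝓝 1) := by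
    have h0 : Tendsto (fun x : ℝ => 1 - 1 / (x + 1)) atTop (𝓝 1) := by
      have h00 : Tendsto (fun x : ℝ => 1 / (x + 1)) atTop (𝓝 0) := by
        simpa [one_div, Pi.inv_def] using (tendsto_atTop_add_const_right atTop (1:ℝ)
          tendsto_id).inv_tendsto_atTop
      simpa using (tendsto_const_nhds (x := (1:ℝ)) (f := atTop)).sub h00
    refine Tendsto.congr' ?_ h0
    filter_upwards [eventually_gt_atTop (0:ℝ)] with x hx
    field_simp
    ring
  have h1 : Tendsto (fun r => Mreal hfin r / (Mreal hfin r + 1)) atTop (𝓝 1) :=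
    hfrac.comp (Mreal_tendsto_atTop hfin hTi)
  refine tendsto_of_tendsto_of_tendsto_of_le_of_le' h1 tendsto_const_nhds ?_ ?_
  · filter_upwards [NN_pos_eventually hfin hTi, Mreal_pos_eventually hfin hTi] with r hN hM
    exact div_le_div_of_nonneg_left (Mreal_nonneg hfin r) (by linarith)
      (NN_le_Mreal_add_one hfin r)
  · filter_upwards [NN_pos_eventually hfin hTi] with r hN
    exact div_le_one_of_le₀ (Mreal_le_NN hfin r) (by linarith)

/-- Transfer of normalization from `M` to `N`. -/
lemma tendsto_div_NN_of_div_M (hTi : T.Infinite) {g : ℝ → ℝ} {L : ℝ}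
    (h : Tendsto (fun r => g r / Mreal hfin r) atTop (𝓝 L)) :
    Tendsto (fun r => g r / NN T r) atTop (𝓝 L) := by
  have := h.mul (M_div_NN_tendsto hfin hTi)
  rw [mul_one] at this
  refine Tendsto.congr' ?_ this
  filter_upwards [Mreal_pos_eventually hfin hTi, NN_pos_eventually hfin hTi] with r hM hN
  field_simp

/-- Transfer of normalization from `N` to `M`. -/
lemma tendsto_div_M_of_div_NN (hTi : T.Infinite) {g : ℝ → ℝ} {L : ℝ}
    (h : Tendsto (fun r => g r / NN T r) atTop (𝓝 L)) :
    Tendsto (fun r => g r / Mreal hfin r) atTop (𝓝 L) := by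
  have hinv : Tendsto (fun r => NN T r / Mreal hfin r) atTop (𝓝 1) := by
    have h1 : Tendsto (fun r => (Mreal hfin r + 1) / Mreal hfin r) atTop (𝓝 1) := by
      have h2 : Tendsto (fun x : ℝ => 1 + 1 / x) atTop (𝓝 1) := by
        simpa using (tendsto_const_nhds (x := (1:ℝ)) (f := atTop)).add
          (tendsto_inv_atTop_zero.congr fun x => (one_div x).symm)
      have h3 := h2.comp (Mreal_tendsto_atTop hfin hTi)
      refine Tendsto.congr' ?_ h3
      filter_upwards [Mreal_pos_eventually hfin hTi] with r hM
      show 1 + 1 / Mreal hfin r = _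
      field_simp
    refine tendsto_of_tendsto_of_tendsto_of_le_of_le' tendsto_const_nhds h1 ?_ ?_
    · filter_upwards [Mreal_pos_eventually hfin hTi] with r hM
      have := Mreal_le_NN hfin r
      rw [le_div_iff₀ (by linarith : (0:ℝ) < Mreal hfin r)]
      linarith
    · filter_upwards [Mreal_pos_eventually hfin hTi] with r hM
      have h4 := NN_le_Mreal_add_one hfin r
      have h5 : (0:ℝ) < Mreal hfin r := by linarith
      gcongr
  have := h.mul hinv
  rw [mul_one] at this
  refine Tendsto.congr' ?_ this
  filter_upwards [Mreal_pos_eventually hfin hTi, NN_pos_eventually hfin hTi] with r hM hN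
  field_simp

end Counting

section EmpP

variable (hfin : ∀ S : Set (EuclideanSpace ℝ (Fin n)),
    Bornology.IsBounded S → (T ∩ S).Finite)

include hfin

/-- The empirical probability measure (junk value `nuP` when there are no points). -/
noncomputable def empP (hn : 1 ≤ n) (r : ℝ) : ProbabilityMeasure Sph :=
  if h : (finite_Ann hfin r).toFinset.card = 0 then nuP hn
  else ⟨(((finite_Ann hfin r).toFinset.card : ℝ≥0∞))⁻¹ • empM hfin hn r, ⟨by
    rw [Measure.smul_apply, empM_univ hfin hn r, smul_eq_mul,
      ENNReal.inv_mul_cancel (by exact_mod_cast h) (ENNReal.natCast_ne_top _)]⟩⟩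

lemma empP_eq (hn : 1 ≤ n) (r : ℝ) (h : (finite_Ann hfin r).toFinset.card ≠ 0) :
    (empP hfin hn r : Measure Sph) =
      (((finite_Ann hfin r).toFinset.card : ℝ≥0∞))⁻¹ • empM hfin hn r := by
  have := congrArg (fun P : ProbabilityMeasure Sph => (P : Measure Sph))
    (show empP hfin hn r = _ from dif_neg h)
  exact this

lemma card_ne_zero_of_Mreal (r : ℝ) (h : 1 ≤ Mreal hfin r) :
    (finite_Ann hfin r).toFinset.card ≠ 0 := by
  rw [Mreal] at h
  intro h0
  rw [h0] at h
  norm_num at h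

lemma empP_apply_toReal (hn : 1 ≤ n) {s : Set Sph} (hs : MeasurableSet s) (r : ℝ)
    (h : (finite_Ann hfin r).toFinset.card ≠ 0) :
    ((empP hfin hn r : Measure Sph) s).toReal =
      cnt (T ∩ Wedge (Subtype.val '' s) r) / Mreal hfin r := by
  classical
  rw [empP_eq hfin hn r h, Measure.smul_apply, empM_apply hfin hn r hs, smul_eq_mul,
    ENNReal.toReal_mul, ENNReal.toReal_inv, ENNReal.toReal_natCast, ENNReal.toReal_natCast,
    cnt_inter_wedge hfin hn s r, Mreal]
  rw [inv_mul_eq_div]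

lemma empP_integral (hn : 1 ≤ n) (r : ℝ)
    (h : (finite_Ann hfin r).toFinset.card ≠ 0) (f : C(Sph, ℝ)) :
    ∫ y, f y ∂(empP hfin hn r : Measure Sph) =
      (1 / Mreal hfin r) *
        ∑ᶠ x ∈ T ∩ {x : EuclideanSpace ℝ (Fin n) | 0 < ‖x‖ ∧ ‖x‖ < r}, sphProjExt f x := by
  rw [empP_eq hfin hn r h, integral_smul_measure, empM_integral hfin hn r f,
    finsum_eq_sum_proj hfin hn r f, ENNReal.toReal_inv, ENNReal.toReal_natCast, smul_eq_mul,
    Mreal, inv_eq_one_div]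

lemma eventually_card_ne_zero (hTi : T.Infinite) :
    ∀ᶠ r in atTop, (finite_Ann hfin r).toFinset.card ≠ 0 := by
  filter_upwards [Mreal_pos_eventually hfin hTi] with r hr
  exact card_ne_zero_of_Mreal hfin r hr

end EmpP

end AngAux

namespace AngAux

variable {n : ℕ}

local notation "Sph" => sphere (0 : EuclideanSpace ℝ (Fin n)) 1

lemma norm_smul_sphere (c : ℝ) (hc : 0 < c) (u : Sph) :
    ‖c • (u : EuclideanSpace ℝ (Fin n))‖ = c := by
  have hu : ‖(u : EuclideanSpace ℝ (Fin n))‖ = 1 := mem_sphere_zero_iff_norm.1 u.2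
  rw [norm_smul, hu, mul_one, Real.norm_eq_abs, abs_of_pos hc]

lemma smul_sphere_mem_wedge {X : Set (EuclideanSpace ℝ (Fin n))} {c : ℝ}
    (hc : c ∈ Set.Ioo (0:ℝ) 1) (u : Sph) (hu : (u : EuclideanSpace ℝ (Fin n)) ∈ X) :
    c • (u : EuclideanSpace ℝ (Fin n)) ∈ Wedge X 1 := by
  have h1 := norm_smul_sphere c hc.1 u
  refine ⟨by rw [h1]; exact hc.1, by rw [h1]; exact hc.2, ?_⟩
  rw [h1, smul_smul, inv_mul_cancel₀ hc.1.ne', one_smul]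
  exact hu

/-- Geometric lemma: the wedge over the (relative) frontier is inside the frontier
of the wedge. -/
lemma wedge_rel_frontier_subset_frontier {X : Set (EuclideanSpace ℝ (Fin n))} :
    Wedge (Subtype.val '' (frontier ((Subtype.val : Sph → _) ⁻¹' X))) 1 ⊆
      frontier (Wedge X 1) := by
  rintro x ⟨h1, h2, y, hy, hyx⟩
  have hx0 : x ≠ 0 := by simpa [norm_pos_iff] using h1
  set c := ‖x‖ with hc
  have hxc : c • (y : EuclideanSpace ℝ (Fin n)) = x := by
    rw [hyx, smul_smul, mul_inv_cancel₀ (by positivity), one_smul]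
  have hcont : Continuous (fun u : Sph => c • (u : EuclideanSpace ℝ (Fin n))) := by
    fun_prop
  constructor
  · -- x ∈ closure (Wedge X 1)
    rw [_root_.mem_closure_iff]
    intro o ho hxo
    have hyo : y ∈ (fun u : Sph => c • (u : EuclideanSpace ℝ (Fin n))) ⁻¹' o := by
      simp only [Set.mem_preimage, hxc]
      exact hxo
    have := ((_root_.mem_closure_iff).1 hy.1) _ (ho.preimage hcont) hyo
    obtain ⟨u, huo, hus⟩ := this
    refine ⟨c • (u : EuclideanSpace ℝ (Fin n)), huo, ?_⟩
    exact smul_sphere_mem_wedge ⟨h1, h2⟩ u hus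
  · -- x ∉ interior (Wedge X 1)
    intro hxint
    have hyint : y ∈ interior ((Subtype.val : Sph → _) ⁻¹' X) := by
      have hA : IsOpen ((fun u : Sph => c • (u : EuclideanSpace ℝ (Fin n))) ⁻¹'
          (interior (Wedge X 1))) := isOpen_interior.preimage hcont
      refine mem_interior.2 ⟨_, ?_, hA, by simp only [Set.mem_preimage, hxc]; exact hxint⟩
      intro u hu
      have huW : c • (u : EuclideanSpace ℝ (Fin n)) ∈ Wedge X 1 := interior_subset hu
      have h3 := huW.2.2
      rw [norm_smul_sphere c h1 u, smul_smul, inv_mul_cancel₀ h1.ne', one_smul] at h3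
      exact h3
    exact hy.2 hyint

lemma wedge_subset_ball (X : Set (EuclideanSpace ℝ (Fin n))) :
    Wedge X 1 ⊆ ball (0 : EuclideanSpace ℝ (Fin n)) 1 := by
  rintro x ⟨-, h2, -⟩
  simpa [mem_ball_zero_iff] using h2

/-- Geometric lemma: the frontier of a wedge is inside the union of the origin, the
sphere and the wedge over the relative frontier. -/
lemma frontier_wedge_subset (s : Set Sph) :
    frontier (Wedge (Subtype.val '' s) 1) ⊆
      {0} ∪ sphere (0 : EuclideanSpace ℝ (Fin n)) 1 ∪
        Wedge (Subtype.val '' (frontier s)) 1 := by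
  intro x hx
  have hle : ‖x‖ ≤ 1 := by
    have h1 : x ∈ closure (Wedge (Subtype.val '' s) 1) := hx.1
    have h2 : closure (Wedge (Subtype.val '' s) 1) ⊆
        closedBall (0 : EuclideanSpace ℝ (Fin n)) 1 := by
      rw [← closure_ball (0 : EuclideanSpace ℝ (Fin n)) one_ne_zero]
      exact closure_mono (wedge_subset_ball _)
    simpa [mem_closedBall_zero_iff] using h2 h1
  by_cases hx0 : x = 0
  · exact Or.inl (Or.inl (by simp [hx0]))
  by_cases hxs : ‖x‖ = 1
  · exact Or.inl (Or.inr (by simpa [mem_sphere_zero_iff_norm] using hxs))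
  have h1 : 0 < ‖x‖ := norm_pos_iff.2 hx0
  have h2 : ‖x‖ < 1 := lt_of_le_of_ne hle hxs
  set y : Sph := ⟨‖x‖⁻¹ • x, normSmul_mem_sphere hx0⟩ with hy
  have hgx : ‖x‖⁻¹ • x = (y : EuclideanSpace ℝ (Fin n)) := rfl
  have hgcont : ContinuousAt (fun z : EuclideanSpace ℝ (Fin n) => ‖z‖⁻¹ • z) x :=
    ((continuous_norm.continuousAt).inv₀ (by positivity)).smul continuousAt_id
  refine Or.inr ⟨h1, h2, y, ?_, rfl⟩
  constructor
  · -- y ∈ closure s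
    rw [_root_.mem_closure_iff]
    intro o ho hyo
    obtain ⟨V, hV, hVo⟩ := isOpen_induced_iff.1 ho
    have hUnhds : (fun z : EuclideanSpace ℝ (Fin n) => ‖z‖⁻¹ • z) ⁻¹' V ∈ 𝓝 x := by
      apply hgcont.preimage_mem_nhds
      apply hV.mem_nhds
      rw [← hVo] at hyo
      exact hyo
    obtain ⟨w, hwV, hwW⟩ := mem_closure_iff_nhds.1 hx.1 _ hUnhds
    obtain ⟨hw1, hw2, u, hus, huw⟩ := hwW
    refine ⟨u, ?_, hus⟩
    rw [← hVo]
    simp only [Set.mem_preimage] at hwV ⊢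
    rw [huw]
    exact hwV
  · -- y ∉ interior s
    intro hyint
    obtain ⟨V, hV, hVint⟩ := isOpen_induced_iff.1 (isOpen_interior : IsOpen (interior s))
    have hxint : x ∈ interior (Wedge (Subtype.val '' s) 1) := by
      have hopen : IsOpen ({z : EuclideanSpace ℝ (Fin n) | 0 < ‖z‖ ∧ ‖z‖ < 1} ∩
          (fun z : EuclideanSpace ℝ (Fin n) => ‖z‖⁻¹ • z) ⁻¹' V) := by
        refine ContinuousOn.isOpen_inter_preimage ?_ ?_ hV
        · intro z hz
          exact (((continuous_norm.continuousAt).inv₀ hz.1.ne').smul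
            continuousAt_id).continuousWithinAt
        · have : {z : EuclideanSpace ℝ (Fin n) | 0 < ‖z‖ ∧ ‖z‖ < 1} =
              (fun z : EuclideanSpace ℝ (Fin n) => ‖z‖) ⁻¹' (Set.Ioo 0 1) := rfl
          rw [this]
          exact isOpen_Ioo.preimage continuous_norm
      refine mem_interior.2 ⟨_, ?_, hopen, ⟨⟨h1, h2⟩, ?_⟩⟩
      · rintro z ⟨⟨hz1, hz2⟩, hzV⟩
        have hz0 : z ≠ 0 := by simpa [norm_pos_iff] using hz1
        set u : Sph := ⟨‖z‖⁻¹ • z, normSmul_mem_sphere hz0⟩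
        have hu : u ∈ interior s := by
          rw [← hVint]
          exact hzV
        exact ⟨hz1, hz2, u, interior_subset hu, rfl⟩
      · rw [← hVint] at hyint
        exact hyint
    exact hx.2 hxint

end AngAux

namespace AngAux

variable {n : ℕ} {T : Set (EuclideanSpace ℝ (Fin n))}

local notation "Sph" => sphere (0 : EuclideanSpace ℝ (Fin n)) 1

lemma nu0_inv_univ_ne_zero (hn : 1 ≤ n) : ((nu0 n univ)⁻¹ : ℝ≥0∞) ≠ 0 :=
  ENNReal.inv_ne_zero.2 (nu0_univ_ne_top hn)

/-- C1: null relative frontier implies null wedge frontier. -/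
lemma volume_frontier_wedge_eq_zero (hn : 1 ≤ n) {s : Set Sph}
    (h : (nuP hn : Measure Sph) (frontier s) = 0) :
    volume (frontier (Wedge (Subtype.val '' s) 1)) = 0 := by
  haveI := nontrivial_E hn
  have h0 : nu0 n (frontier s) = 0 := by
    rw [nuP_coe_apply] at h
    rcases mul_eq_zero.1 h with h' | h'
    · exact absurd h' (nu0_inv_univ_ne_zero hn)
    · exact h'
  have h1 : volume (Wedge (Subtype.val '' (frontier s)) 1) = 0 := by
    have h2 := nu0_apply (isClosed_frontier.measurableSet : MeasurableSet (frontier s))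
    rw [h0] at h2
    rcases mul_eq_zero.1 h2.symm with h' | h'
    · exfalso
      have : (n : ℝ≥0∞) ≠ 0 := by exact_mod_cast (Nat.pos_of_ne_zero (by omega)).ne'
      exact this h'
    · exact h'
  refine measure_mono_null (frontier_wedge_subset s) ?_
  refine measure_union_null (measure_union_null ?_ ?_) h1
  · simp
  · exact Measure.addHaar_sphere volume 0 1

/-- C2: null wedge frontier implies null relative frontier. -/
lemma nuP_frontier_eq_zero (hn : 1 ≤ n) {X : Set (EuclideanSpace ℝ (Fin n))}
    (hX : X ⊆ sphere (0 : EuclideanSpace ℝ (Fin n)) 1)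
    (h : volume (frontier (Wedge X 1)) = 0) :
    (nuP hn : Measure Sph) (frontier ((Subtype.val : Sph → _) ⁻¹' X)) = 0 := by
  have h1 : volume
      (Wedge (Subtype.val '' (frontier ((Subtype.val : Sph → _) ⁻¹' X))) 1) = 0 :=
    measure_mono_null wedge_rel_frontier_subset_frontier h
  have h2 : nu0 n (frontier ((Subtype.val : Sph → _) ⁻¹' X)) = 0 := by
    rw [nu0_apply (isClosed_frontier.measurableSet :
      MeasurableSet (frontier ((Subtype.val : Sph → _) ⁻¹' X))), h1, mul_zero]
  rw [nuP_coe_apply, h2, mul_zero]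

lemma image_preimage_sphere {X : Set (EuclideanSpace ℝ (Fin n))}
    (hX : X ⊆ sphere (0 : EuclideanSpace ℝ (Fin n)) 1) :
    Subtype.val '' ((Subtype.val : Sph → _) ⁻¹' X) = X :=
  Set.image_preimage_eq_of_subset (by rwa [Subtype.range_coe])

section Directions

variable (hfin : ∀ S : Set (EuclideanSpace ℝ (Fin n)),
    Bornology.IsBounded S → (T ∩ S).Finite)

include hfin

/-- Weak convergence of the empirical measures, given the continuous-test hypothesis. -/
lemma weak_conv_of_tests (hn : 1 ≤ n) (hTi : T.Infinite)
    (htest : ∀ f : C(Sph, ℝ),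
      Tendsto
        (fun r => (1 / NN T r) *
          ∑ᶠ x ∈ T ∩ {x : EuclideanSpace ℝ (Fin n) | 0 < ‖x‖ ∧ ‖x‖ < r}, sphProjExt f x)
        atTop
        (𝓝 ((1 / (volume (ball (0 : EuclideanSpace ℝ (Fin n)) 1)).toReal) *
          ∫ x in ball (0 : EuclideanSpace ℝ (Fin n)) 1, sphProjExt f x))) :
    Tendsto (fun r => empP hfin hn r) atTop (𝓝 (nuP hn)) := by
  rw [ProbabilityMeasure.tendsto_iff_forall_integral_tendsto]
  intro g
  set f : C(Sph, ℝ) := g.toContinuousMap with hf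
  have h1 := htest f
  rw [target_integral_eq hn f] at h1
  -- switch normalization from NN to Mreal
  have h2 : Tendsto
      (fun r => (∑ᶠ x ∈ T ∩ {x : EuclideanSpace ℝ (Fin n) | 0 < ‖x‖ ∧ ‖x‖ < r},
        sphProjExt f x) / NN T r) atTop (𝓝 (∫ y, f y ∂(nuP hn : Measure Sph))) := by
    refine Tendsto.congr (fun r => ?_) h1
    rw [one_div, inv_mul_eq_div]
  have h3 := tendsto_div_M_of_div_NN hfin hTi h2
  refine Tendsto.congr' ?_ h3
  filter_upwards [eventually_card_ne_zero hfin hTi] with r hr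
  have heq := empP_integral hfin hn r hr f
  rw [one_div, inv_mul_eq_div] at heq
  rw [← heq]
  rfl

/-- The reverse direction: continuous tests imply the angular condition. -/
lemma angular_of_tests (hn : 1 ≤ n) (hTi : T.Infinite)
    (htest : ∀ f : C(Sph, ℝ),
      Tendsto
        (fun r => (1 / NN T r) *
          ∑ᶠ x ∈ T ∩ {x : EuclideanSpace ℝ (Fin n) | 0 < ‖x‖ ∧ ‖x‖ < r}, sphProjExt f x)
        atTop
        (𝓝 ((1 / (volume (ball (0 : EuclideanSpace ℝ (Fin n)) 1)).toReal) *
          ∫ x in ball (0 : EuclideanSpace ℝ (Fin n)) 1, sphProjExt f x))) :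
    AngularCond T := by
  intro X hX hXm hXf
  have hconv := weak_conv_of_tests hfin hn hTi htest
  set E' : Set Sph := (Subtype.val : Sph → _) ⁻¹' X with hE'
  have hE'm : MeasurableSet E' := measurable_subtype_coe hXm
  have hnull : (nuP hn : Measure Sph) (frontier E') = 0 := nuP_frontier_eq_zero hn hX hXf
  have hnull' : (nuP hn) (frontier E') = 0 := by
    have : ((nuP hn) (frontier E') : ℝ≥0∞) = 0 := by
      rw [ProbabilityMeasure.ennreal_coeFn_eq_coeFn_toMeasure]
      exact hnull
    exact_mod_cast this
  have hkey := ProbabilityMeasure.tendsto_measure_of_null_frontier_of_tendsto hconv hnull'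
  -- now convert to real statement
  have hreal : Tendsto (fun r => ((empP hfin hn r : Measure Sph) E').toReal) atTop
      (𝓝 (((nuP hn : Measure Sph) E').toReal)) := by
    exact NNReal.tendsto_coe.2 hkey
  have himg := image_preimage_sphere hX
  have hev : ∀ᶠ r in atTop,
      ((empP hfin hn r : Measure Sph) E').toReal = cnt (T ∩ Wedge X r) / Mreal hfin r := by
    filter_upwards [eventually_card_ne_zero hfin hTi] with r hr
    rw [empP_apply_toReal hfin hn hE'm r hr, himg]
  have h4 : Tendsto (fun r => cnt (T ∩ Wedge X r) / Mreal hfin r) atTop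
      (𝓝 (((nuP hn : Measure Sph) E').toReal)) := by
    refine Tendsto.congr' ?_ hreal
    exact hev
  have h5 := tendsto_div_NN_of_div_M hfin hTi h4
  have h6 : ((nuP hn : Measure Sph) E').toReal =
      (volume (Wedge X 1)).toReal /
        (volume (ball (0 : EuclideanSpace ℝ (Fin n)) 1)).toReal := by
    rw [nuP_toReal_eq hn hE'm, himg]
  rwa [h6] at h5

/-- Convergence of empirical measures on null-frontier sets, from the angular condition. -/
lemma empP_tendsto_of_angular (hn : 1 ≤ n) (hTi : T.Infinite) (hA : AngularCond T)
    {E' : Set Sph} (hE'm : MeasurableSet E')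
    (hE'f : (nuP hn : Measure Sph) (frontier E') = 0) :
    Tendsto (fun r => ((empP hfin hn r : Measure Sph) E')) atTop
      (𝓝 ((nuP hn : Measure Sph) E')) := by
  have hX : Subtype.val '' E' ⊆ sphere (0 : EuclideanSpace ℝ (Fin n)) 1 :=
    Subtype.coe_image_subset _ _
  have hXm : MeasurableSet (Subtype.val '' E') :=
    MeasurableSet.subtype_image isClosed_sphere.measurableSet hE'm
  have hWf := volume_frontier_wedge_eq_zero hn hE'f
  have h0 := hA (Subtype.val '' E') hX hXm hWf
  have h1 := tendsto_div_M_of_div_NN hfin hTi h0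
  have h2 : Tendsto (fun r => ((empP hfin hn r : Measure Sph) E').toReal) atTop
      (𝓝 (((nuP hn : Measure Sph) E').toReal)) := by
    rw [nuP_toReal_eq hn hE'm]
    refine Tendsto.congr' ?_ h1
    filter_upwards [eventually_card_ne_zero hfin hTi] with r hr
    rw [empP_apply_toReal hfin hn hE'm r hr]
  have h3 := ENNReal.tendsto_ofReal h2
  rw [ENNReal.ofReal_toReal (measure_ne_top _ _)] at h3
  exact h3.congr fun r => ENNReal.ofReal_toReal (measure_ne_top _ _)

/-- The forward direction: the angular condition implies the continuous tests. -/
lemma tests_of_angular (hn : 1 ≤ n) (hTi : T.Infinite) (hA : AngularCond T)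
    (f : C(Sph, ℝ)) :
    Tendsto
      (fun r => (1 / NN T r) *
        ∑ᶠ x ∈ T ∩ {x : EuclideanSpace ℝ (Fin n) | 0 < ‖x‖ ∧ ‖x‖ < r}, sphProjExt f x)
      atTop
      (𝓝 ((1 / (volume (ball (0 : EuclideanSpace ℝ (Fin n)) 1)).toReal) *
        ∫ x in ball (0 : EuclideanSpace ℝ (Fin n)) 1, sphProjExt f x)) := by
  rw [target_integral_eq hn f]
  suffices hM : Tendsto
      (fun r => (∑ᶠ x ∈ T ∩ {x : EuclideanSpace ℝ (Fin n) | 0 < ‖x‖ ∧ ‖x‖ < r},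
        sphProjExt f x) / Mreal hfin r) atTop
      (𝓝 (∫ y, f y ∂(nuP hn : Measure Sph))) by
    have h5 := tendsto_div_NN_of_div_M hfin hTi hM
    refine Tendsto.congr (fun r => ?_) h5
    rw [one_div, inv_mul_eq_div]
  rw [tendsto_iff_seq_tendsto]
  intro rs hrs
  -- the sequence of empirical probability measures
  set μs : ℕ → ProbabilityMeasure Sph := fun k => empP hfin hn (rs k) with hμs
  have key : ∀ {E'' : Set Sph}, MeasurableSet E'' →
      (nuP hn : Measure Sph) (frontier E'') = 0 →
      Tendsto (fun k => ((μs k : Measure Sph) E'')) atTop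
        (𝓝 ((nuP hn : Measure Sph) E'')) := by
    intro E'' hm hf0
    exact (empP_tendsto_of_angular hfin hn hTi hA hm hf0).comp hrs
  have h_open : ∀ G : Set Sph, IsOpen G →
      (nuP hn : Measure Sph) G ≤ atTop.liminf fun k => ((μs k : Measure Sph) G) :=
    fun G hG => le_liminf_measure_open_of_forall_tendsto_measure
      (fun hm hf0 => key hm hf0) G hG
  have h_opens : ∀ G : Set Sph, IsOpen G →
      (nuP hn) G ≤ atTop.liminf fun k => (μs k) G := by
    intro G hG
    have obs := h_open G hG
    have aux : ((atTop.liminf fun k => (μs k) G : ℝ≥0) : ℝ≥0∞) =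
        atTop.liminf fun k => (((μs k) G : ℝ≥0) : ℝ≥0∞) := by
      refine Monotone.map_liminf_of_continuousAt (F := atTop) ENNReal.coe_mono
        (fun k => (μs k) G) ENNReal.continuous_coe.continuousAt ?_ ?_
      · exact IsBoundedUnder.isCoboundedUnder_ge ⟨1, by
          simp only [eventually_map, eventually_atTop]
          exact ⟨0, fun k _ => ProbabilityMeasure.apply_le_one _ _⟩⟩
      · exact ⟨0, by simp⟩
    rw [← ENNReal.coe_le_coe, aux]
    simpa only [ProbabilityMeasure.ennreal_coeFn_eq_coeFn_toMeasure] using obs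
  have htend : Tendsto μs atTop (𝓝 (nuP hn)) :=
    MeasureTheory.tendsto_of_forall_isOpen_le_liminf h_opens
  have hint := ProbabilityMeasure.tendsto_iff_forall_integral_tendsto.1 htend
    (BoundedContinuousFunction.mkOfCompact f)
  refine Tendsto.congr' ?_ hint
  filter_upwards [hrs.eventually (eventually_card_ne_zero hfin hTi)] with k hk
  have heq := empP_integral hfin hn (rs k) hk f
  rw [one_div, inv_mul_eq_div] at heq
  rw [show (∫ ω, (BoundedContinuousFunction.mkOfCompact f) ω ∂(μs k : Measure Sph)) =
    ∫ y, f y ∂(μs k : Measure Sph) from rfl, hμs, heq]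
  rfl

end Directions

end AngAux


theorem angular_condition_iff_continuous_test
    {n : ℕ} (hn : 1 ≤ n) (T : Set (EuclideanSpace ℝ (Fin n)))
    (hTc : T.Countable) (hTi : T.Infinite)
    (hfin : ∀ S : Set (EuclideanSpace ℝ (Fin n)), Bornology.IsBounded S → (T ∩ S).Finite) :
    AngularCond T ↔
      ∀ f : C(sphere (0 : EuclideanSpace ℝ (Fin n)) 1, ℝ),
        Tendsto
          (fun r => (1 / NN T r) *
            ∑ᶠ x ∈ T ∩ {x : EuclideanSpace ℝ (Fin n) | 0 < ‖x‖ ∧ ‖x‖ < r}, sphProjExt f x)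
          atTop
          (𝓝 ((1 / (volume (ball (0 : EuclideanSpace ℝ (Fin n)) 1)).toReal) *
            ∫ x in ball (0 : EuclideanSpace ℝ (Fin n)) 1, sphProjExt f x)) := by
  constructor
  · intro hA f
    exact AngAux.tests_of_angular hfin hn hTi hA f
  · intro ht
    exact AngAux.angular_of_tests hfin hn hTi ht
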